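/- A compatible function g : Z_2 → Z_2 preserves measure if and only if it can be represented as g(x) = d + x + 2·v(x) for some d ∈ Z_2 and some compatible v : Z_2 → Z_2. -/

import Mathlib

open scoped BigOperators

/-- The `j`-th binary digit of a 2-adic integer, as an element of `ZMod 2`. -/
noncomputable def bit2 (j : ℕ) (x : ℤ_[2]) : ZMod 2 := ((x.appr (j+1) / 2^j : ℕ) : ZMod 2)

/-- Compatibility = 1-Lipschitz w.r.t. the 2-adic metric. -/
def Compatible (f : ℤ_[2] → ℤ_[2]) : Prop := ∀ x y : ℤ_[2], ‖f x - f y‖ ≤ ‖x - y‖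

/-- Reduction of a 2-adic integer modulo `2^n`. -/
noncomputable def padMod (n : ℕ) (x : ℤ_[2]) : ZMod (2^n) := (x.appr n : ZMod (2^n))

/-- The map induced by `f : ℤ₂ → ℤ₂` on `ZMod (2^n)` (via canonical lifts). -/
noncomputable def inducedMap (n : ℕ) (f : ℤ_[2] → ℤ_[2]) : ZMod (2^n) → ZMod (2^n) :=
  fun a => padMod n (f ((a.val : ℕ) : ℤ_[2]))

/-- A self-map of a set is a single cycle (transitive on points). -/
def IsSingleCycle {α : Type*} (g : α → α) : Prop := ∀ a b : α, ∃ k : ℕ, g^[k] a = b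

/-- Measure preservation: `f` induces a bijection modulo `2^n` for every `n`. -/
def MeasurePreservingZ (f : ℤ_[2] → ℤ_[2]) : Prop := ∀ n : ℕ, Function.Bijective (inducedMap n f)

/-- Ergodicity: `f` induces a single-cycle permutation modulo `2^n` for every `n`. -/
def ErgodicZ (f : ℤ_[2] → ℤ_[2]) : Prop := ∀ n : ℕ, IsSingleCycle (inducedMap n f)

/-- Induced map modulo `2^n` of an `m`-variate map on `(ℤ₂)^m`. -/
noncomputable def inducedMapM (m n : ℕ) (G : (Fin m → ℤ_[2]) → Fin m → ℤ_[2]) :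
    (Fin m → ZMod (2^n)) → Fin m → ZMod (2^n) :=
  fun a j => padMod n (G (fun i => (((a i).val : ℕ) : ℤ_[2])) j)

/-- Coordinatewise compatibility of an `m`-variate map. -/
def CompatibleM (m : ℕ) (G : (Fin m → ℤ_[2]) → Fin m → ℤ_[2]) : Prop :=
  ∀ (n : ℕ) (x y : Fin m → ℤ_[2]), (∀ i, padMod n (x i) = padMod n (y i)) →
    ∀ j, padMod n (G x j) = padMod n (G y j)

/-- Ergodicity of an `m`-variate map: single cycle modulo `2^n` for all `n`. -/
def ErgodicM (m : ℕ) (G : (Fin m → ℤ_[2]) → Fin m → ℤ_[2]) : Prop :=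
  ∀ n : ℕ, IsSingleCycle (inducedMapM m n G)

/-- The 2-adic integer with prescribed binary digits. -/
noncomputable def ofBits (b : ℕ → ZMod 2) : ℤ_[2] := ∑' i : ℕ, ((b i).val : ℤ_[2]) * 2^i

/-- Bitwise XOR of 2-adic integers. -/
noncomputable def xor2 (x y : ℤ_[2]) : ℤ_[2] := ofBits (fun i => bit2 i x + bit2 i y)

/-- Bitwise AND of 2-adic integers. -/
noncomputable def and2 (x y : ℤ_[2]) : ℤ_[2] := ofBits (fun i => bit2 i x * bit2 i y)

/-- Bitwise AND of a list, the empty AND being `-1` (the all-ones string). -/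
noncomputable def andL (l : List ℤ_[2]) : ℤ_[2] := l.foldr and2 (-1)

lemma padMod_eq_toZModPow (n : ℕ) (x : ℤ_[2]) : padMod n x = PadicInt.toZModPow n x := rfl

lemma padMod_eq_iff (n : ℕ) (x y : ℤ_[2]) :
    padMod n x = padMod n y ↔ ‖x - y‖ ≤ (2:ℝ) ^ (-(n:ℤ)) := by
  rw [padMod_eq_toZModPow, padMod_eq_toZModPow, ← sub_eq_zero, ← map_sub,
    ← RingHom.mem_ker, PadicInt.ker_toZModPow, ← PadicInt.norm_le_pow_iff_mem_span_pow]
  norm_num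

lemma padMod_natCast_val (n : ℕ) (a : ZMod (2^n)) : padMod n ((a.val : ℕ) : ℤ_[2]) = a := by
  haveI : NeZero (2^n) := ⟨by positivity⟩
  rw [padMod_eq_toZModPow, map_natCast, ZMod.natCast_val, ZMod.cast_id]

lemma inducedMap_padMod {g : ℤ_[2] → ℤ_[2]} (hg : Compatible g) (n : ℕ) (x : ℤ_[2]) :
    inducedMap n g (padMod n x) = padMod n (g x) := by
  unfold inducedMap
  rw [padMod_eq_iff]
  refine le_trans (hg _ _) ?_
  rw [← padMod_eq_iff]
  exact padMod_natCast_val n (padMod n x)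

lemma two_dvd_of_not_dvd {a b : ℤ_[2]} (ha : ¬ (2:ℤ_[2]) ∣ a) (hb : ¬ (2:ℤ_[2]) ∣ b) :
    (2:ℤ_[2]) ∣ a - b := by
  have key : ∀ z : ℤ_[2], ((2:ℤ_[2]) ∣ z) ↔ PadicInt.toZMod z = 0 := by
    intro z
    rw [← Ideal.mem_span_singleton, ← RingHom.mem_ker, PadicInt.ker_toZMod,
      PadicInt.maximalIdeal_eq_span_p]
    norm_num
  rw [key, map_sub, sub_eq_zero]
  have h1 := (not_iff_not.mpr (key a)).mp ha
  have h2 := (not_iff_not.mpr (key b)).mp hb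
  revert h1 h2; generalize PadicInt.toZMod a = u; generalize PadicInt.toZMod b = w
  revert u w; decide

lemma keyA {g : ℤ_[2] → ℤ_[2]} (hg : Compatible g) (hm : MeasurePreservingZ g) (x y : ℤ_[2]) :
    ‖(g x - g y) - (x - y)‖ ≤ ‖x - y‖ / 2 := by
  rcases eq_or_ne x y with rfl | hxy
  · simp
  have hs : x - y ≠ 0 := sub_ne_zero.mpr hxy
  obtain ⟨n, hvn⟩ : ∃ n : ℕ, (x - y).valuation = (n:ℤ) :=
    ⟨(x - y).valuation, rfl⟩
  have hval : ‖x - y‖ = (2:ℝ) ^ (-(n:ℤ)) := by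
    rw [PadicInt.norm_eq_zpow_neg_valuation hs, hvn]
    norm_num
  -- x ≢ y mod 2^(n+1)
  have hne : padMod (n+1) x ≠ padMod (n+1) y := by
    rw [Ne, padMod_eq_iff, hval]
    push_cast
    rw [not_le]
    apply zpow_lt_zpow_right₀ (by norm_num)
    omega
  -- g x ≢ g y mod 2^(n+1)
  have hgne : ¬ ‖g x - g y‖ ≤ (2:ℝ) ^ (-((n:ℤ)+1)) := by
    intro h
    apply hne
    apply (hm (n+1)).1
    rw [inducedMap_padMod hg, inducedMap_padMod hg, padMod_eq_iff]
    exact h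
  -- 2^n divides both differences
  have hdvd : ∀ z : ℤ_[2], ‖z‖ ≤ (2:ℝ) ^ (-(n:ℤ)) → (2:ℤ_[2])^n ∣ z := by
    intro z hz
    have h2 : z ∈ Ideal.span {((2:ℕ):ℤ_[2])^n} :=
      (PadicInt.norm_le_pow_iff_mem_span_pow z n).mp (by exact_mod_cast hz)
    rw [Ideal.mem_span_singleton] at h2
    exact_mod_cast h2
  obtain ⟨a, ha⟩ := hdvd _ ((hg x y).trans_eq hval)
  obtain ⟨b, hb⟩ := hdvd _ hval.le
  have hnorm2 : ‖(2:ℤ_[2])‖ = 1/2 := by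
    have h := @PadicInt.norm_p 2 _
    norm_num at h ⊢
    exact h
  have hnormpow : ∀ k : ℕ, ‖(2:ℤ_[2])^k‖ = (2:ℝ)^(-(k:ℤ)) := by
    intro k
    rw [norm_pow, hnorm2, zpow_neg, zpow_natCast, one_div, inv_pow]
  -- oddness
  have hodd : ∀ c z : ℤ_[2], z = 2^n * c → ¬ ‖z‖ ≤ (2:ℝ)^(-((n:ℤ)+1)) → ¬ (2:ℤ_[2]) ∣ c := by
    rintro c z rfl hz ⟨e, rfl⟩
    apply hz
    have he : (2:ℤ_[2])^n * (2 * e) = 2^(n+1) * e := by ring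
    calc ‖(2:ℤ_[2])^n * (2 * e)‖ = ‖(2:ℤ_[2])^(n+1)‖ * ‖e‖ := by
          rw [he, norm_mul]
      _ ≤ (2:ℝ)^(-((n:ℤ)+1)) * 1 := by
          rw [hnormpow]
          push_cast
          exact mul_le_mul_of_nonneg_left (PadicInt.norm_le_one e) (by positivity)
      _ = (2:ℝ)^(-((n:ℤ)+1)) := mul_one _
  have hao : ¬ (2:ℤ_[2]) ∣ a := hodd a _ ha hgne
  have hbo : ¬ (2:ℤ_[2]) ∣ b := by
    refine hodd b _ hb ?_
    rw [hval, not_le]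
    apply zpow_lt_zpow_right₀ (by norm_num)
    omega
  obtain ⟨c, hc⟩ := two_dvd_of_not_dvd hao hbo
  have heq : (g x - g y) - (x - y) = 2^(n+1) * c := by
    rw [ha, hb, ← mul_sub, hc]; ring
  rw [heq, norm_mul, hnormpow, hval]
  calc (2:ℝ)^(-((n:ℤ)+1)) * ‖c‖ ≤ (2:ℝ)^(-((n:ℤ)+1)) * 1 := by
        exact mul_le_mul_of_nonneg_left (PadicInt.norm_le_one c) (by positivity)
    _ = (2:ℝ)^(-(n:ℤ)) / 2 := by
        rw [mul_one]
        rw [show -((n:ℤ)+1) = -(n:ℤ) - 1 by ring, zpow_sub₀ (by norm_num : (2:ℝ) ≠ 0)]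
        norm_num

lemma norm_two : ‖(2:ℤ_[2])‖ = 1/2 := by
  have h := @PadicInt.norm_p 2 _
  norm_num at h ⊢
  exact h

/-- a compatible `g : ℤ₂ → ℤ₂` preserves measure iff
`g(x) = d + x + 2·v(x)` for some `d ∈ ℤ₂` and compatible `v`. -/
theorem measurePreserving_iff_repr (g : ℤ_[2] → ℤ_[2]) (hg : Compatible g) :
    MeasurePreservingZ g ↔
      ∃ (d : ℤ_[2]) (v : ℤ_[2] → ℤ_[2]), Compatible v ∧
        ∀ x : ℤ_[2], g x = d + x + 2 * v x := by
  constructor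
  · intro hm
    have hdvd : ∀ x : ℤ_[2], (2:ℤ_[2]) ∣ g x - x - g 0 := by
      intro x
      have h := keyA hg hm x 0
      have h1 : ‖g x - x - g 0‖ ≤ (2:ℝ) ^ (-(1:ℤ)) := by
        have he : g x - x - g 0 = (g x - g 0) - (x - 0) := by ring
        rw [he]
        refine h.trans ?_
        rw [sub_zero]
        have h0 := PadicInt.norm_le_one x
        norm_num
        linarith
      have h2 : g x - x - g 0 ∈ Ideal.span {((2:ℕ):ℤ_[2])^1} :=
        (PadicInt.norm_le_pow_iff_mem_span_pow _ 1).mp (by exact_mod_cast h1)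
      rw [Ideal.mem_span_singleton] at h2
      exact_mod_cast h2
    refine ⟨g 0, fun x => (hdvd x).choose, ?_, ?_⟩
    · intro x y
      have hx := (hdvd x).choose_spec
      have hy := (hdvd y).choose_spec
      have key : (2:ℤ_[2]) * ((hdvd x).choose - (hdvd y).choose) = (g x - g y) - (x - y) := by
        rw [mul_sub, ← hx, ← hy]; ring
      have h := keyA hg hm x y
      rw [← key, norm_mul, norm_two] at h
      linarith
    · intro x
      have hx := (hdvd x).choose_spec
      linear_combination hx
  · rintro ⟨d, v, hv, hrep⟩ n
    haveI : NeZero ((2:ℕ)^n) := ⟨by positivity⟩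
    rw [← Finite.injective_iff_bijective]
    intro a b hab
    set x : ℤ_[2] := ((a.val : ℕ) : ℤ_[2]) with hxd
    set y : ℤ_[2] := ((b.val : ℕ) : ℤ_[2]) with hyd
    have hab' : padMod n (g x) = padMod n (g y) := hab
    have h1 : ‖g x - g y‖ ≤ (2:ℝ) ^ (-(n:ℤ)) := (padMod_eq_iff n _ _).mp hab'
    have h2 : ‖x - y‖ ≤ (2:ℝ) ^ (-(n:ℤ)) := by
      by_contra hc
      have hd : x - y = (g x - g y) + (-(2*(v x - v y))) := by
        rw [hrep x, hrep y]; ring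
      have hmax : ‖x - y‖ ≤ max ‖g x - g y‖ ‖-(2*(v x - v y))‖ := by
        rw [hd]; exact PadicInt.nonarchimedean _ _
      rw [norm_neg, norm_mul, norm_two] at hmax
      have hvxy : ‖v x - v y‖ ≤ ‖x - y‖ := hv x y
      rcases le_max_iff.mp hmax with h | h
      · exact hc (h.trans h1)
      · have : ‖x - y‖ ≤ 0 := by linarith
        have : ‖x - y‖ = 0 := le_antisymm this (norm_nonneg _)
        apply hc
        rw [this]
        positivity
    have h3 : padMod n x = padMod n y := (padMod_eq_iff n _ _).mpr h2
    rwa [hxd, hyd, padMod_natCast_val, padMod_natCast_val] at h3
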